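/- arXiv:0901.4923 — 3 statements merged into one kernel-verified Lean document; each statement's English description precedes it below -/
import Mathlib

section
/- Let Γ be a simple graph of order n and size m, admitting a partition {V_1,...,V_r} of its vertex set into r ≥ 2 global defensive k-alliances, and let C be the number of edges of Γ having endpoints in different sets of this partition. Then C ≤ (2m − nk)/4. -/
open Finset

/-- The number of neighbors that the vertex `v` has inside the set `S`. -/
def degIn {V : Type*} [Fintype V] [DecidableEq V] (G : SimpleGraph V) [DecidableRel G.Adj]
    (S : Finset V) (v : V) : ℕ :=
  (S.filter fun u => G.Adj v u).card

/-- `S` is a defensive `k`-alliance: `S` is nonempty and every vertex of `S` has at least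
`k` more neighbors inside `S` than outside. -/
def IsDefensiveAlliance {V : Type*} [Fintype V] [DecidableEq V] (G : SimpleGraph V)
    [DecidableRel G.Adj] (k : ℤ) (S : Finset V) : Prop :=
  S.Nonempty ∧ ∀ v ∈ S, (degIn G Sᶜ v : ℤ) + k ≤ (degIn G S v : ℤ)

/-- `S` is a dominating set: every vertex outside `S` has a neighbor in `S`. -/
def IsDominatingSet {V : Type*} [Fintype V] [DecidableEq V] (G : SimpleGraph V)
    (S : Finset V) : Prop :=
  ∀ v ∉ S, ∃ u ∈ S, G.Adj v u

/-- A global defensive `k`-alliance is a defensive `k`-alliance which is a dominating set. -/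
def IsGlobalDefensiveAlliance {V : Type*} [Fintype V] [DecidableEq V] (G : SimpleGraph V)
    [DecidableRel G.Adj] (k : ℤ) (S : Finset V) : Prop :=
  IsDefensiveAlliance G k S ∧ IsDominatingSet G S

/-- The defensive `k`-alliance number: the minimum cardinality of a defensive `k`-alliance. -/
noncomputable def defAllianceNum {V : Type*} [Fintype V] [DecidableEq V] (G : SimpleGraph V)
    [DecidableRel G.Adj] (k : ℤ) : ℕ :=
  sInf {s : ℕ | ∃ S : Finset V, IsDefensiveAlliance G k S ∧ S.card = s}

/-- The global defensive `k`-alliance number. -/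
noncomputable def globalDefAllianceNum {V : Type*} [Fintype V] [DecidableEq V] (G : SimpleGraph V)
    [DecidableRel G.Adj] (k : ℤ) : ℕ :=
  sInf {s : ℕ | ∃ S : Finset V, IsGlobalDefensiveAlliance G k S ∧ S.card = s}

/-- A partition of the vertex set all whose parts are defensive `k`-alliances. -/
def IsDefAlliancePartition {V : Type*} [Fintype V] [DecidableEq V] (G : SimpleGraph V)
    [DecidableRel G.Adj] (k : ℤ) (P : Finpartition (univ : Finset V)) : Prop :=
  ∀ S ∈ P.parts, IsDefensiveAlliance G k S

/-- A partition of the vertex set all whose parts are global defensive `k`-alliances. -/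
def IsGlobalDefAlliancePartition {V : Type*} [Fintype V] [DecidableEq V] (G : SimpleGraph V)
    [DecidableRel G.Adj] (k : ℤ) (P : Finpartition (univ : Finset V)) : Prop :=
  ∀ S ∈ P.parts, IsGlobalDefensiveAlliance G k S

/-- The defensive `k`-alliance partition number `ψₖᵈ`. -/
noncomputable def defPartitionNum {V : Type*} [Fintype V] [DecidableEq V] (G : SimpleGraph V)
    [DecidableRel G.Adj] (k : ℤ) : ℕ :=
  sSup {r : ℕ | ∃ P : Finpartition (univ : Finset V),
    IsDefAlliancePartition G k P ∧ P.parts.card = r}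

/-- The global defensive `k`-alliance partition number `ψₖᵍᵈ`. -/
noncomputable def globalDefPartitionNum {V : Type*} [Fintype V] [DecidableEq V]
    (G : SimpleGraph V) [DecidableRel G.Adj] (k : ℤ) : ℕ :=
  sSup {r : ℕ | ∃ P : Finpartition (univ : Finset V),
    IsGlobalDefAlliancePartition G k P ∧ P.parts.card = r}

/-- The set of edges of `G` whose two endpoints lie in different parts of the partition `P`. -/
noncomputable def crossEdges {V : Type*} [Fintype V] [DecidableEq V] (G : SimpleGraph V)
    [DecidableRel G.Adj] (P : Finpartition (univ : Finset V)) : Finset (Sym2 V) :=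
  @Finset.filter _ (fun e => ¬ ∃ S ∈ P.parts, ∀ v ∈ e, v ∈ S)
    (Classical.decPred _) G.edgeFinset


noncomputable def crossG {V : Type*} [Fintype V] [DecidableEq V] (G : SimpleGraph V)
    [DecidableRel G.Adj] (P : Finpartition (univ : Finset V)) : SimpleGraph V where
  Adj u v := G.Adj u v ∧ P.part u ≠ P.part v
  symm := ⟨fun u v h => ⟨h.1.symm, h.2.symm⟩⟩
  loopless := ⟨fun v h => G.loopless.irrefl v h.1⟩

noncomputable instance iDec {V : Type*} [Fintype V] [DecidableEq V] (G : SimpleGraph V)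
    [DecidableRel G.Adj] (P : Finpartition (univ : Finset V)) :
    DecidableRel (crossG G P).Adj := Classical.decRel _

lemma degCross {V : Type*} [Fintype V] [DecidableEq V] (G : SimpleGraph V)
    [DecidableRel G.Adj] (P : Finpartition (univ : Finset V)) (v : V) :
    (crossG G P).degree v = degIn G (P.part v)ᶜ v := by
  rw [← SimpleGraph.card_neighborFinset_eq_degree]
  congr 1
  ext u
  simp only [SimpleGraph.mem_neighborFinset, degIn, mem_filter, mem_compl]
  simp only [crossG]
  constructor
  · rintro ⟨h, hne⟩
    refine ⟨fun hu => hne ?_, h⟩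
    exact (P.part_eq_of_mem (P.part_mem.2 (mem_univ v)) hu).symm
  · rintro ⟨hu, h⟩
    refine ⟨h, fun he => hu ?_⟩
    exact he ▸ P.mem_part (mem_univ u)

lemma degSplit {V : Type*} [Fintype V] [DecidableEq V] (G : SimpleGraph V)
    [DecidableRel G.Adj] (S : Finset V) (v : V) :
    degIn G S v + degIn G Sᶜ v = G.degree v := by
  rw [← SimpleGraph.card_neighborFinset_eq_degree]
  unfold degIn
  rw [← Finset.card_union_of_disjoint]
  · congr 1
    ext u
    simp only [mem_union, mem_filter, mem_compl, SimpleGraph.mem_neighborFinset]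
    tauto
  · exact Finset.disjoint_filter_filter (disjoint_compl_right)

lemma crossEq {V : Type*} [Fintype V] [DecidableEq V] (G : SimpleGraph V)
    [DecidableRel G.Adj] (P : Finpartition (univ : Finset V)) :
    crossEdges G P = (crossG G P).edgeFinset := by
  ext e
  induction e using Sym2.inductionOn with
  | hf a b =>
    simp only [crossEdges, mem_filter, SimpleGraph.mem_edgeFinset, SimpleGraph.mem_edgeSet,
      Sym2.mem_iff]
    simp only [crossG]
    constructor
    · rintro ⟨hab, hne⟩
      refine ⟨hab, fun he => hne ⟨P.part a, P.part_mem.2 (mem_univ a), ?_⟩⟩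
      rintro v (rfl | rfl)
      · exact P.mem_part (mem_univ v)
      · exact he ▸ P.mem_part (mem_univ v)
    · rintro ⟨hab, hne⟩
      refine ⟨hab, fun ⟨S, hS, hmem⟩ => hne ?_⟩
      rw [P.part_eq_of_mem hS (hmem a (Or.inl rfl)),
        P.part_eq_of_mem hS (hmem b (Or.inr rfl))]

lemma keyIneq {V : Type*} [Fintype V] [DecidableEq V] (G : SimpleGraph V)
    [DecidableRel G.Adj] (k : ℤ) (P : Finpartition (univ : Finset V))
    (hP : IsGlobalDefAlliancePartition G k P) :
    4 * ((crossEdges G P).card : ℤ) + (Fintype.card V : ℤ) * k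
      ≤ 2 * (G.edgeFinset.card : ℤ) := by
  have hsum : ∑ v : V, ((crossG G P).degree v : ℤ) = 2 * ((crossEdges G P).card : ℤ) := by
    rw [crossEq]
    exact_mod_cast congrArg (Nat.cast : ℕ → ℤ)
      ((crossG G P).sum_degrees_eq_twice_card_edges)
  have hdeg : ∑ v : V, (G.degree v : ℤ) = 2 * (G.edgeFinset.card : ℤ) := by
    exact_mod_cast congrArg (Nat.cast : ℕ → ℤ) (G.sum_degrees_eq_twice_card_edges)
  have hv : ∀ v : V, 2 * ((crossG G P).degree v : ℤ) + k ≤ (G.degree v : ℤ) := by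
    intro v
    have hpart := (hP (P.part v) (P.part_mem.2 (mem_univ v))).1.2 v (P.mem_part (mem_univ v))
    have hs := degSplit G (P.part v) v
    rw [degCross]
    omega
  calc 4 * ((crossEdges G P).card : ℤ) + (Fintype.card V : ℤ) * k
      = ∑ v : V, (2 * ((crossG G P).degree v : ℤ) + k) := by
        rw [Finset.sum_add_distrib, ← Finset.mul_sum, hsum, Finset.sum_const,
          Finset.card_univ, nsmul_eq_mul]; ring
    _ ≤ ∑ v : V, (G.degree v : ℤ) := Finset.sum_le_sum fun v _ => hv v
    _ = 2 * (G.edgeFinset.card : ℤ) := hdeg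

/-- For a partition of `Γ` (order `n`, size `m`) into `r ≥ 2` global defensive `k`-alliances,
the number `C` of edges with endpoints in different parts satisfies `C ≤ (2m - nk)/4`. -/
theorem statement6 {V : Type*} [Fintype V] [DecidableEq V]
    (G : SimpleGraph V) [DecidableRel G.Adj] (k : ℤ) (r : ℕ) (hr : 2 ≤ r)
    (P : Finpartition (univ : Finset V)) (hP : IsGlobalDefAlliancePartition G k P)
    (hPr : P.parts.card = r) :
    ((crossEdges G P).card : ℚ) ≤
      (2 * (G.edgeFinset.card : ℚ) - (Fintype.card V : ℚ) * (k : ℚ)) / 4 := by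
  have h := keyIneq G k P hP
  have hq : 4 * ((crossEdges G P).card : ℚ) + (Fintype.card V : ℚ) * k
      ≤ 2 * (G.edgeFinset.card : ℚ) := by exact_mod_cast h
  linarith
end

section
/- Let Γ_1 and Γ_2 be simple graphs. If Γ_1 contains a defensive k_1-alliance and Γ_2 contains a defensive k_2-alliance, then the Cartesian product Γ_1×Γ_2 contains a defensive (k_1+k_2)-alliance, and a_{k_1+k_2}^d(Γ_1×Γ_2) ≤ a_{k_1}^d(Γ_1) · a_{k_2}^d(Γ_2). -/
open Finset

instance {α β : Type*} [DecidableEq α] [DecidableEq β] (G : SimpleGraph α) (H : SimpleGraph β)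
    [DecidableRel G.Adj] [DecidableRel H.Adj] : DecidableRel (G.boxProd H).Adj := fun _ _ =>
  decidable_of_iff' _ SimpleGraph.boxProd_adj


lemma degIn_prod {α β : Type*} [Fintype α] [Fintype β] [DecidableEq α] [DecidableEq β]
    (G : SimpleGraph α) (H : SimpleGraph β) [DecidableRel G.Adj] [DecidableRel H.Adj]
    (S₁ : Finset α) (S₂ : Finset β) {a : α} {b : β} (ha : a ∈ S₁) (hb : b ∈ S₂) :
    degIn (G.boxProd H) (S₁ ×ˢ S₂) (a, b) = degIn G S₁ a + degIn H S₂ b := by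
  unfold degIn
  rw [show (S₁ ×ˢ S₂).filter (fun u => (G.boxProd H).Adj (a, b) u)
      = ((S₁.filter fun u => G.Adj a u).image (·, b))
        ∪ ((S₂.filter fun u => H.Adj b u).image (a, ·)) by
    ext ⟨x, y⟩
    simp only [mem_filter, mem_product, mem_union, mem_image, SimpleGraph.boxProd_adj]
    constructor
    · rintro ⟨⟨hx, hy⟩, (⟨hadj, rfl⟩ | ⟨hadj, rfl⟩)⟩
      · exact Or.inl ⟨x, ⟨hx, hadj⟩, rfl⟩
      · exact Or.inr ⟨y, ⟨hy, hadj⟩, rfl⟩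
    · rintro (⟨u, ⟨hu, hadj⟩, h⟩ | ⟨u, ⟨hu, hadj⟩, h⟩) <;>
        (obtain ⟨rfl, rfl⟩ := Prod.mk.injEq .. ▸ h; simp_all)]
  rw [card_union_of_disjoint, card_image_of_injective _ (fun x y h => (Prod.mk.injEq ..).mp h |>.1),
    card_image_of_injective _ (fun x y h => (Prod.mk.injEq ..).mp h |>.2)]
  simp only [disjoint_left, mem_image, mem_filter]
  rintro ⟨x, y⟩ ⟨u, ⟨hu, hadj⟩, h⟩ ⟨u', ⟨hu', hadj'⟩, h'⟩
  obtain ⟨rfl, rfl⟩ := Prod.mk.injEq .. ▸ h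
  obtain ⟨rfl, rfl⟩ := Prod.mk.injEq .. ▸ h'
  exact G.irrefl hadj

lemma degIn_prod_compl {α β : Type*} [Fintype α] [Fintype β] [DecidableEq α] [DecidableEq β]
    (G : SimpleGraph α) (H : SimpleGraph β) [DecidableRel G.Adj] [DecidableRel H.Adj]
    (S₁ : Finset α) (S₂ : Finset β) {a : α} {b : β} (ha : a ∈ S₁) (hb : b ∈ S₂) :
    degIn (G.boxProd H) (S₁ ×ˢ S₂)ᶜ (a, b) = degIn G S₁ᶜ a + degIn H S₂ᶜ b := by
  unfold degIn
  rw [show ((S₁ ×ˢ S₂)ᶜ).filter (fun u => (G.boxProd H).Adj (a, b) u)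
      = ((S₁ᶜ.filter fun u => G.Adj a u).image (·, b))
        ∪ ((S₂ᶜ.filter fun u => H.Adj b u).image (a, ·)) by
    ext ⟨x, y⟩
    simp only [mem_filter, mem_compl, mem_product, mem_union, mem_image,
      SimpleGraph.boxProd_adj, not_and]
    constructor
    · rintro ⟨hxy, (⟨hadj, rfl⟩ | ⟨hadj, rfl⟩)⟩
      · exact Or.inl ⟨x, ⟨fun hx => hxy hx hb, hadj⟩, rfl⟩
      · exact Or.inr ⟨y, ⟨fun hy => hxy ha hy, hadj⟩, rfl⟩
    · rintro (⟨u, ⟨hu, hadj⟩, h⟩ | ⟨u, ⟨hu, hadj⟩, h⟩) <;>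
        (obtain ⟨rfl, rfl⟩ := Prod.mk.injEq .. ▸ h; simp_all)]
  rw [card_union_of_disjoint, card_image_of_injective _ (fun x y h => (Prod.mk.injEq ..).mp h |>.1),
    card_image_of_injective _ (fun x y h => (Prod.mk.injEq ..).mp h |>.2)]
  simp only [disjoint_left, mem_image, mem_filter]
  rintro ⟨x, y⟩ ⟨u, ⟨hu, hadj⟩, h⟩ ⟨u', ⟨hu', hadj'⟩, h'⟩
  obtain ⟨rfl, rfl⟩ := Prod.mk.injEq .. ▸ h
  obtain ⟨rfl, rfl⟩ := Prod.mk.injEq .. ▸ h'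
  exact G.irrefl hadj

lemma prod_alliance {α β : Type*} [Fintype α] [Fintype β] [DecidableEq α] [DecidableEq β]
    (G : SimpleGraph α) (H : SimpleGraph β) [DecidableRel G.Adj] [DecidableRel H.Adj]
    {k₁ k₂ : ℤ} {S₁ : Finset α} {S₂ : Finset β}
    (h₁ : IsDefensiveAlliance G k₁ S₁) (h₂ : IsDefensiveAlliance H k₂ S₂) :
    IsDefensiveAlliance (G.boxProd H) (k₁ + k₂) (S₁ ×ˢ S₂) := by
  obtain ⟨hne₁, hd₁⟩ := h₁
  obtain ⟨hne₂, hd₂⟩ := h₂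
  refine ⟨hne₁.product hne₂, ?_⟩
  rintro ⟨a, b⟩ hab
  rw [mem_product] at hab
  obtain ⟨ha, hb⟩ := hab
  rw [degIn_prod G H S₁ S₂ ha hb, degIn_prod_compl G H S₁ S₂ ha hb]
  have := hd₁ a ha
  have := hd₂ b hb
  push_cast
  linarith

/-- If `Γᵢ` contains a defensive `kᵢ`-alliance, `i ∈ {1,2}`, then `Γ₁ × Γ₂` contains a
defensive `(k₁+k₂)`-alliance, and `a_{k₁+k₂}ᵈ(Γ₁×Γ₂) ≤ a_{k₁}ᵈ(Γ₁) a_{k₂}ᵈ(Γ₂)`. -/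
theorem statement13 {α β : Type*} [Fintype α] [Fintype β] [DecidableEq α] [DecidableEq β]
    (G : SimpleGraph α) (H : SimpleGraph β) [DecidableRel G.Adj] [DecidableRel H.Adj]
    (k₁ k₂ : ℤ)
    (h₁ : ∃ S : Finset α, IsDefensiveAlliance G k₁ S)
    (h₂ : ∃ S : Finset β, IsDefensiveAlliance H k₂ S) :
    (∃ X : Finset (α × β), IsDefensiveAlliance (G.boxProd H) (k₁ + k₂) X) ∧
      defAllianceNum (G.boxProd H) (k₁ + k₂) ≤ defAllianceNum G k₁ * defAllianceNum H k₂ := by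
  have hne₁ : {s : ℕ | ∃ S : Finset α, IsDefensiveAlliance G k₁ S ∧ S.card = s}.Nonempty := by
    obtain ⟨S, hS⟩ := h₁; exact ⟨S.card, S, hS, rfl⟩
  have hne₂ : {s : ℕ | ∃ S : Finset β, IsDefensiveAlliance H k₂ S ∧ S.card = s}.Nonempty := by
    obtain ⟨S, hS⟩ := h₂; exact ⟨S.card, S, hS, rfl⟩
  obtain ⟨S₁, hS₁, hc₁⟩ := Nat.sInf_mem hne₁
  obtain ⟨S₂, hS₂, hc₂⟩ := Nat.sInf_mem hne₂
  refine ⟨⟨S₁ ×ˢ S₂, prod_alliance G H hS₁ hS₂⟩, ?_⟩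
  have : (S₁ ×ˢ S₂).card = defAllianceNum G k₁ * defAllianceNum H k₂ := by
    rw [card_product]; unfold defAllianceNum; rw [hc₁, hc₂]
  exact this ▸ Nat.sInf_le ⟨S₁ ×ˢ S₂, prod_alliance G H hS₁ hS₂, rfl⟩
end

section
/- For i ∈ {1,2}, let Γ_i be a simple graph of order n_i admitting a partition Π_i of its vertex set into r_i ≥ 1 global defensive k_i-alliances, and let x_i be the minimum cardinality of a set in Π_i. Then γ_{k_1+k_2}^d(Γ_1×Γ_2) ≤ min{ x_1·n_2, x_2·n_1 }. -/
open Finset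

lemma degIn_boxProd {α β : Type*} [Fintype α] [Fintype β] [DecidableEq α] [DecidableEq β]
    (G : SimpleGraph α) (H : SimpleGraph β) [DecidableRel G.Adj] [DecidableRel H.Adj]
    (S : Finset α) (T : Finset β) (a : α) (b : β) :
    degIn (G.boxProd H) (S ×ˢ T) (a, b) =
      (if b ∈ T then degIn G S a else 0) + (if a ∈ S then degIn H T b else 0) := by
  classical
  unfold degIn
  have hset : (S ×ˢ T).filter (fun u => (G.boxProd H).Adj (a, b) u)
      = ((S.filter (G.Adj a)) ×ˢ (T.filter (· = b))) ∪
        ((S.filter (· = a)) ×ˢ (T.filter (H.Adj b))) := by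
    ext ⟨x, y⟩
    simp only [mem_filter, mem_product, mem_union, SimpleGraph.boxProd_adj]
    constructor
    · rintro ⟨⟨hx, hy⟩, h | h⟩
      · exact Or.inl ⟨⟨hx, h.1⟩, hy, h.2.symm⟩
      · exact Or.inr ⟨⟨hx, h.2.symm⟩, hy, h.1⟩
    · rintro (⟨⟨hx, h1⟩, hy, h2⟩ | ⟨⟨hx, h1⟩, hy, h2⟩)
      · exact ⟨⟨hx, hy⟩, Or.inl ⟨h1, h2.symm⟩⟩
      · exact ⟨⟨hx, hy⟩, Or.inr ⟨h2, h1.symm⟩⟩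
  have hdisj : Disjoint ((S.filter (G.Adj a)) ×ˢ (T.filter (· = b)))
      ((S.filter (· = a)) ×ˢ (T.filter (H.Adj b))) := by
    rw [Finset.disjoint_left]
    rintro ⟨x, y⟩ h1 h2
    simp only [mem_product, mem_filter] at h1 h2
    exact G.irrefl (h2.1.2 ▸ h1.1.2)
  rw [hset, Finset.card_union_of_disjoint hdisj, Finset.card_product, Finset.card_product,
    Finset.filter_eq' T b, Finset.filter_eq' S a]
  split_ifs with h1 h2 h2 <;> simp [h1, h2, mul_comm]

lemma degIn_le_degree {V : Type*} [Fintype V] [DecidableEq V] (G : SimpleGraph V)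
    [DecidableRel G.Adj] (S : Finset V) (v : V) : degIn G S v ≤ G.degree v := by
  rw [← SimpleGraph.card_neighborFinset_eq_degree]
  apply Finset.card_le_card
  intro u hu
  simp only [degIn, mem_filter] at hu
  simpa [SimpleGraph.mem_neighborFinset] using hu.2

lemma degIn_univ {V : Type*} [Fintype V] [DecidableEq V] (G : SimpleGraph V)
    [DecidableRel G.Adj] (v : V) : degIn G (univ : Finset V) v = G.degree v := by
  rw [← SimpleGraph.card_neighborFinset_eq_degree, SimpleGraph.neighborFinset_eq_filter]
  rfl

lemma k_le_degree {V : Type*} [Fintype V] [DecidableEq V] (G : SimpleGraph V)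
    [DecidableRel G.Adj] (k : ℤ) (P : Finpartition (univ : Finset V))
    (hP : IsGlobalDefAlliancePartition G k P) (v : V) : k ≤ (G.degree v : ℤ) := by
  obtain ⟨T, hT, hvT⟩ := P.exists_mem (mem_univ v)
  have h := (hP T hT).1.2 v hvT
  have h2 : (degIn G T v : ℤ) ≤ (G.degree v : ℤ) := by
    exact_mod_cast degIn_le_degree G T v
  linarith [Int.natCast_nonneg (degIn G Tᶜ v)]

/-- If `Γᵢ` (of order `nᵢ`) admits a partition `Πᵢ` into `rᵢ ≥ 1` global defensive
`kᵢ`-alliances and `xᵢ` is the minimum cardinality of a part of `Πᵢ`, then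
`γ_{k₁+k₂}ᵈ(Γ₁×Γ₂) ≤ min{x₁ n₂, x₂ n₁}`. -/
theorem statement17 {α β : Type*} [Fintype α] [Fintype β] [DecidableEq α] [DecidableEq β]
    (G : SimpleGraph α) (H : SimpleGraph β) [DecidableRel G.Adj] [DecidableRel H.Adj]
    (k₁ k₂ : ℤ)
    (P₁ : Finpartition (univ : Finset α)) (P₂ : Finpartition (univ : Finset β))
    (hP₁ : IsGlobalDefAlliancePartition G k₁ P₁)
    (hP₂ : IsGlobalDefAlliancePartition H k₂ P₂)
    (hr₁ : 1 ≤ P₁.parts.card) (hr₂ : 1 ≤ P₂.parts.card)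
    (x₁ x₂ : ℕ)
    (hx₁ : IsLeast {c : ℕ | ∃ S ∈ P₁.parts, S.card = c} x₁)
    (hx₂ : IsLeast {c : ℕ | ∃ S ∈ P₂.parts, S.card = c} x₂) :
    globalDefAllianceNum (G.boxProd H) (k₁ + k₂) ≤
      min (x₁ * Fintype.card β) (x₂ * Fintype.card α) := by
  classical
  obtain ⟨⟨S₁, hS₁mem, hS₁card⟩, _⟩ := hx₁
  obtain ⟨⟨S₂, hS₂mem, hS₂card⟩, _⟩ := hx₂
  have h₁ := hP₁ S₁ hS₁mem
  have h₂ := hP₂ S₂ hS₂mem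
  have hβne : (univ : Finset β).Nonempty := by
    obtain ⟨b, hb⟩ := h₂.1.1
    exact ⟨b, mem_univ b⟩
  have hαne : (univ : Finset α).Nonempty := by
    obtain ⟨a, ha⟩ := h₁.1.1
    exact ⟨a, mem_univ a⟩
  have hcompl1 : (S₁ ×ˢ (univ : Finset β))ᶜ = S₁ᶜ ×ˢ (univ : Finset β) := by
    ext ⟨x, y⟩; simp
  have hcompl2 : ((univ : Finset α) ×ˢ S₂)ᶜ = (univ : Finset α) ×ˢ S₂ᶜ := by
    ext ⟨x, y⟩; simp
  have claimA : IsGlobalDefensiveAlliance (G.boxProd H) (k₁ + k₂) (S₁ ×ˢ (univ : Finset β)) := by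
    refine ⟨⟨h₁.1.1.product hβne, ?_⟩, ?_⟩
    · rintro ⟨a, b⟩ hv
      rw [mem_product] at hv
      rw [hcompl1, degIn_boxProd, degIn_boxProd]
      have ha : a ∈ S₁ := hv.1
      have ha' : a ∉ S₁ᶜ := by simp [ha]
      simp only [mem_univ, if_true, ha, ha', if_false]
      have hd := h₁.1.2 a ha
      have hk₂ := k_le_degree H k₂ P₂ hP₂ b
      rw [degIn_univ]
      push_cast
      linarith
    · rintro ⟨a, b⟩ hv
      rw [mem_product] at hv
      simp only [mem_univ, and_true] at hv
      obtain ⟨a', ha', hadj⟩ := h₁.2 a hv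
      exact ⟨(a', b), mem_product.2 ⟨ha', mem_univ b⟩, Or.inl ⟨hadj, rfl⟩⟩
  have claimB : IsGlobalDefensiveAlliance (G.boxProd H) (k₁ + k₂) ((univ : Finset α) ×ˢ S₂) := by
    refine ⟨⟨hαne.product h₂.1.1, ?_⟩, ?_⟩
    · rintro ⟨a, b⟩ hv
      rw [mem_product] at hv
      rw [hcompl2, degIn_boxProd, degIn_boxProd]
      have hb : b ∈ S₂ := hv.2
      have hb' : b ∉ S₂ᶜ := by simp [hb]
      simp only [mem_univ, if_true, hb, hb', if_false]
      have hd := h₂.1.2 b hb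
      have hk₁ := k_le_degree G k₁ P₁ hP₁ a
      rw [degIn_univ]
      push_cast
      linarith
    · rintro ⟨a, b⟩ hv
      rw [mem_product] at hv
      simp only [mem_univ, true_and] at hv
      obtain ⟨b', hb', hadj⟩ := h₂.2 b hv
      exact ⟨(a, b'), mem_product.2 ⟨mem_univ a, hb'⟩, Or.inr ⟨hadj, rfl⟩⟩
  apply le_min
  · apply Nat.sInf_le
    exact ⟨S₁ ×ˢ (univ : Finset β), claimA, by
      rw [Finset.card_product, hS₁card, Finset.card_univ]⟩
  · apply Nat.sInf_le
    exact ⟨(univ : Finset α) ×ˢ S₂, claimB, by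
      rw [Finset.card_product, hS₂card, Finset.card_univ, mul_comm]⟩
end
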